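/- Let k be a field of characteristic zero, and let f, g ∈ k[T] be non-zero coprime polynomials, not both constant. Then for every n > 2, the polynomial f_n = f^n - g^n has a primitive prime divisor: there is an irreducible π ∈ k[T] with π ∣ f_n and π ∤ f_m for all 1 ≤ m < n. -/

import Mathlib

open Polynomial

section Hev

variable {k : Type*} [Field k]

/-- Homogenized evaluation: `hev f g P m = ∑ i, P_i f^i g^(m-i)`. -/
noncomputable def hev (f g P : Polynomial k) (m : ℕ) : Polynomial k :=
  ∑ i ∈ Finset.range (m + 1), Polynomial.C (P.coeff i) * f ^ i * g ^ (m - i)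

lemma hev_apply {L : Type*} [Field L] (ψ : Polynomial k →+* L) (f g P : Polynomial k)
    (m : ℕ) (hg : ψ g ≠ 0) (hm : P.natDegree ≤ m) :
    ψ (hev f g P m) = ψ g ^ m * Polynomial.eval₂ (ψ.comp Polynomial.C) (ψ f / ψ g) P := by
  rw [Polynomial.eval₂_eq_sum_range' _ (Nat.lt_succ_of_le hm), hev, map_sum, Finset.mul_sum]
  refine Finset.sum_congr rfl fun i hi => ?_
  rw [Finset.mem_range, Nat.lt_succ_iff] at hi
  rw [map_mul, map_mul, map_pow, map_pow, RingHom.comp_apply, div_pow]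
  field_simp
  rw [mul_assoc, ← pow_add, Nat.sub_add_cancel hi]

lemma hev_mul (f g P Q : Polynomial k) (p q : ℕ) (hg : g ≠ 0)
    (hp : P.natDegree ≤ p) (hq : Q.natDegree ≤ q) :
    hev f g (P * Q) (p + q) = hev f g P p * hev f g Q q := by
  have hinj : Function.Injective (algebraMap (Polynomial k) (RatFunc k)) :=
    IsFractionRing.injective _ _
  apply hinj
  have hg' : algebraMap (Polynomial k) (RatFunc k) g ≠ 0 := by
    simpa using fun h => hg (hinj (by simpa using h))
  rw [map_mul, hev_apply _ f g _ _ hg' (le_trans (Polynomial.natDegree_mul_le)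
    (add_le_add hp hq)), hev_apply _ f g _ _ hg' hp, hev_apply _ f g _ _ hg' hq,
    Polynomial.eval₂_mul, pow_add]
  ring

lemma hev_prod {ι : Type*} (f g : Polynomial k) (hg : g ≠ 0) (s : Finset ι)
    (P : ι → Polynomial k) (d : ι → ℕ) (h : ∀ i ∈ s, (P i).natDegree ≤ d i) :
    hev f g (∏ i ∈ s, P i) (∑ i ∈ s, d i) = ∏ i ∈ s, hev f g (P i) (d i) := by
  induction s using Finset.cons_induction with
  | empty =>
    simp [hev]
  | cons a s ha ih =>
    rw [Finset.prod_cons, Finset.sum_cons, hev_mul f g _ _ _ _ hg (h a (Finset.mem_cons_self a s))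
      (le_trans (Polynomial.natDegree_prod_le _ _) (Finset.sum_le_sum fun i hi =>
        h i (Finset.mem_cons_of_mem hi))), Finset.prod_cons,
      ih (fun i hi => h i (Finset.mem_cons_of_mem hi))]

lemma hev_X_pow_sub_one (f g : Polynomial k) (hg : g ≠ 0) (n : ℕ) :
    hev f g (X ^ n - 1) n = f ^ n - g ^ n := by
  have hinj : Function.Injective (algebraMap (Polynomial k) (RatFunc k)) :=
    IsFractionRing.injective _ _
  apply hinj
  have hg' : algebraMap (Polynomial k) (RatFunc k) g ≠ 0 := by
    simpa using fun h => hg (hinj (by simpa using h))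
  have hdeg : (X ^ n - 1 : Polynomial k).natDegree ≤ n :=
    le_trans (Polynomial.natDegree_sub_le _ _) (by simp)
  rw [hev_apply _ f g _ _ hg' hdeg]
  simp only [Polynomial.eval₂_sub, Polynomial.eval₂_pow, Polynomial.eval₂_X,
    Polynomial.eval₂_one, map_sub, map_pow]
  field_simp
  rw [div_pow, mul_sub, mul_div_assoc', mul_comm (_ ^ n) (_ ^ n), mul_div_assoc,
    div_self (pow_ne_zero _ hg'), mul_one, mul_one]

lemma hev_map {k' : Type*} [Field k'] (σ : k →+* k') (f g P : Polynomial k) (m : ℕ) :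
    Polynomial.map σ (hev f g P m) = hev (f.map σ) (g.map σ) (P.map σ) m := by
  rw [hev, Polynomial.map_sum, hev]
  refine Finset.sum_congr rfl fun i _ => ?_
  simp [Polynomial.map_mul, Polynomial.map_pow, Polynomial.coeff_map]

lemma hev_X_sub_C (f g : Polynomial k) (ζ : k) :
    hev f g (X - C ζ) 1 = f - C ζ * g := by
  rw [hev]
  rw [Finset.sum_range_succ, Finset.sum_range_succ, Finset.sum_range_zero]
  simp [Polynomial.coeff_sub, Polynomial.coeff_X, Polynomial.coeff_C]
  ring

end Hev

/-- Theorem 1.3 (characteristic zero): for `n > 2`, the polynomial `f^n - g^n`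
has a primitive prime divisor. -/
theorem stmt_5 {k : Type*} [Field k] [CharZero k]
    (f g : Polynomial k) (hf : f ≠ 0) (hg : g ≠ 0) (hfg : IsCoprime f g)
    (hconst : ¬ (f.natDegree = 0 ∧ g.natDegree = 0)) :
    ∀ n : ℕ, 2 < n →
      ∃ π : Polynomial k, Irreducible π ∧ π ∣ f ^ n - g ^ n ∧
        ∀ m : ℕ, 1 ≤ m → m < n → ¬ π ∣ f ^ m - g ^ m := by
  intro n hn
  have hn0 : 0 < n := by omega
  set Φ : Polynomial k := Polynomial.cyclotomic n k with hΦdef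
  set A : Polynomial k := hev f g Φ n.totient with hAdef
  -- A divides f^n - g^n
  obtain ⟨Q, hQ⟩ := Polynomial.cyclotomic.dvd_X_pow_sub_one n k
  have hΦ0 : Φ ≠ 0 := Polynomial.cyclotomic_ne_zero n k
  have hXn0 : (X ^ n - 1 : Polynomial k) ≠ 0 := by
    simpa using Polynomial.X_pow_sub_C_ne_zero hn0 (1 : k)
  have hQ0 : Q ≠ 0 := by
    intro h; rw [h, mul_zero] at hQ; exact hXn0 hQ
  have hdegX : (X ^ n - 1 : Polynomial k).natDegree = n := by
    simpa using Polynomial.natDegree_X_pow_sub_C (n := n) (r := (1 : k))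
  have hdegΦ : Φ.natDegree = n.totient := Polynomial.natDegree_cyclotomic n k
  have hdegQ : Q.natDegree = n - n.totient := by
    have := Polynomial.natDegree_mul hΦ0 hQ0
    rw [← hQ, hdegX, hdegΦ] at this
    omega
  have htot_le : n.totient ≤ n := Nat.totient_le n
  have hAdvd : A ∣ f ^ n - g ^ n := by
    refine ⟨hev f g Q (n - n.totient), ?_⟩
    rw [hAdef, ← hev_mul f g Φ Q _ _ hg hdegΦ.le hdegQ.le,
      Nat.add_sub_cancel' htot_le, ← hQ, hev_X_pow_sub_one f g hg n]
  -- A is nonconstant (via base change to the algebraic closure)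
  have hApos : 0 < A.natDegree := by
    set K := AlgebraicClosure k with hK
    set σ : k →+* K := algebraMap k K with hσdef
    haveI : NeZero (n : K) := ⟨Nat.cast_ne_zero.mpr hn0.ne'⟩
    obtain ⟨μ, hμroot⟩ := IsAlgClosed.exists_root (Polynomial.cyclotomic n K) (by
      rw [Polynomial.degree_cyclotomic]
      exact_mod_cast (Nat.totient_pos.mpr hn0).ne')
    have hμ : IsPrimitiveRoot μ n := Polynomial.isRoot_cyclotomic_iff.mp hμroot
    have hcard : (primitiveRoots n K).card = n.totient := hμ.card_primitiveRoots
    have hgK : g.map σ ≠ 0 := Polynomial.map_ne_zero hg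
    have hfgK : IsCoprime (f.map σ) (g.map σ) := hfg.map (Polynomial.mapRingHom σ)
    have hmapA : A.map σ
        = ∏ ζ ∈ primitiveRoots n K, (f.map σ - Polynomial.C ζ * g.map σ) := by
      rw [hAdef, hev_map σ, hΦdef, Polynomial.map_cyclotomic,
        Polynomial.cyclotomic_eq_prod_X_sub_primitiveRoots hμ,
        show n.totient = ∑ _ζ ∈ primitiveRoots n K, 1 by
          rw [Finset.sum_const, smul_eq_mul, mul_one, hcard],
        hev_prod _ _ hgK _ _ _ (fun ζ _ => Polynomial.natDegree_X_sub_C_le ζ)]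
      exact Finset.prod_congr rfl fun ζ _ => hev_X_sub_C _ _ ζ
    have hfac0 : ∀ ζ ∈ primitiveRoots n K, f.map σ - Polynomial.C ζ * g.map σ ≠ 0 := by
      intro ζ _ h
      rw [sub_eq_zero] at h
      have hdvd : g.map σ ∣ f.map σ := ⟨Polynomial.C ζ, by rw [h]; ring⟩
      have hunit : IsUnit (g.map σ) := hfgK.isUnit_of_dvd' hdvd dvd_rfl
      have hgd0 : (g.map σ).natDegree = 0 := Polynomial.natDegree_eq_zero_of_isUnit hunit
      have hgd : g.natDegree = 0 := by rwa [Polynomial.natDegree_map σ] at hgd0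
      have hfd : f.natDegree = 0 := by
        have h1 : (f.map σ).natDegree = 0 := by
          rw [h]
          exact Nat.le_zero.mp (le_trans (Polynomial.natDegree_C_mul_le _ _) hgd0.le)
        rwa [Polynomial.natDegree_map σ] at h1
      exact hconst ⟨hfd, hgd⟩
    have hdegsum : (A.map σ).natDegree
        = ∑ ζ ∈ primitiveRoots n K, (f.map σ - Polynomial.C ζ * g.map σ).natDegree := by
      rw [hmapA, Polynomial.natDegree_prod _ _ hfac0]
    rw [show A.natDegree = (A.map σ).natDegree from (Polynomial.natDegree_map σ).symm]
    by_contra hle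
    push_neg at hle
    have hsum0 : ∑ ζ ∈ primitiveRoots n K, (f.map σ - Polynomial.C ζ * g.map σ).natDegree = 0 := by
      rw [← hdegsum]; omega
    have hall : ∀ ζ ∈ primitiveRoots n K,
        (f.map σ - Polynomial.C ζ * g.map σ).natDegree = 0 :=
      fun ζ hζ => Finset.sum_eq_zero_iff.mp hsum0 ζ hζ
    have h2 : 1 < (primitiveRoots n K).card := by
      rw [hcard]
      obtain ⟨r, hr⟩ := Nat.totient_even hn
      have := Nat.totient_pos.mpr hn0
      omega
    obtain ⟨ζ₁, hζ₁, ζ₂, hζ₂, hne⟩ := Finset.one_lt_card.mp h2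
    have e1 := Polynomial.eq_C_of_natDegree_eq_zero (hall ζ₁ hζ₁)
    have e2 := Polynomial.eq_C_of_natDegree_eq_zero (hall ζ₂ hζ₂)
    have hsub : Polynomial.C (ζ₂ - ζ₁) * g.map σ
        = Polynomial.C ((f.map σ - Polynomial.C ζ₁ * g.map σ).coeff 0)
          - Polynomial.C ((f.map σ - Polynomial.C ζ₂ * g.map σ).coeff 0) := by
      rw [← e1, ← e2, map_sub]
      ring
    have hCne : (Polynomial.C (ζ₂ - ζ₁) : Polynomial K) ≠ 0 := by
      rw [Ne, Polynomial.C_eq_zero]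
      exact sub_ne_zero.mpr hne.symm
    have hgdeg : (g.map σ).natDegree = 0 := by
      have h3 := congrArg Polynomial.natDegree hsub
      rw [Polynomial.natDegree_mul hCne hgK, Polynomial.natDegree_C, zero_add, ← map_sub,
        Polynomial.natDegree_C] at h3
      exact h3
    have hfdeg : (f.map σ).natDegree = 0 := by
      rw [sub_eq_iff_eq_add.mp e1]
      have h4 : (Polynomial.C ζ₁ * g.map σ).natDegree = 0 :=
        Nat.le_zero.mp (le_trans (Polynomial.natDegree_C_mul_le _ _) hgdeg.le)
      refine Nat.le_zero.mp (le_trans (Polynomial.natDegree_add_le _ _) ?_)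
      rw [Polynomial.natDegree_C, h4]
      simp
    exact hconst ⟨by rwa [Polynomial.natDegree_map σ] at hfdeg,
      by rwa [Polynomial.natDegree_map σ] at hgdeg⟩
  have hA0 : A ≠ 0 := by
    intro h; rw [h] at hApos; simp at hApos
  have hAnu : ¬ IsUnit A := by
    intro h
    have := Polynomial.natDegree_eq_zero_of_isUnit h
    omega
  obtain ⟨π, hπirr, hπA⟩ := WfDvdMonoid.exists_irreducible_factor hAnu hA0
  refine ⟨π, hπirr, hπA.trans hAdvd, ?_⟩
  -- primitivity
  intro m hm1 hmn hπm
  have hdvdn : π ∣ f ^ n - g ^ n := hπA.trans hAdvd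
  have hπf : ¬ π ∣ f := by
    intro hdf
    have hdg : π ∣ g := hπirr.prime.dvd_of_dvd_pow (n := n) (by
      have h1 : π ∣ f ^ n - (f ^ n - g ^ n) := dvd_sub (hdf.pow hn0.ne') hdvdn
      simpa using h1)
    obtain ⟨a, b, hab⟩ := hfg
    exact hπirr.not_isUnit (isUnit_of_dvd_one
      (hab ▸ dvd_add (hdf.mul_left a) (hdg.mul_left b)))
  have hπg : ¬ π ∣ g := by
    intro hdg
    refine hπf (hπirr.prime.dvd_of_dvd_pow (n := n) ?_)
    have h1 : π ∣ f ^ n - g ^ n + g ^ n := dvd_add hdvdn (hdg.pow hn0.ne')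
    simpa using h1
  -- pass to the residue field
  letI : (Ideal.span {π}).IsMaximal := PrincipalIdealRing.isMaximal_of_irreducible hπirr
  letI : Field (Polynomial k ⧸ Ideal.span {π}) := Ideal.Quotient.field _
  set ψ := Ideal.Quotient.mk (Ideal.span {π}) with hψdef
  have hker : ∀ x : Polynomial k, ψ x = 0 ↔ π ∣ x := by
    intro x
    rw [hψdef, Ideal.Quotient.eq_zero_iff_mem, Ideal.mem_span_singleton]
  haveI : CharZero (Polynomial k ⧸ Ideal.span {π}) := by
    have hinj : Function.Injective (ψ.comp (Polynomial.C : k →+* Polynomial k)) :=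
      RingHom.injective _
    refine ⟨fun a b hab => Nat.cast_injective (R := k) ?_⟩
    apply hinj
    simpa using hab
  haveI : NeZero ((n : ℕ) : Polynomial k ⧸ Ideal.span {π}) := ⟨Nat.cast_ne_zero.mpr hn0.ne'⟩
  have hψg : ψ g ≠ 0 := fun h => hπg ((hker g).mp h)
  have hψA : ψ A = 0 := (hker A).mpr hπA
  rw [hAdef, hev_apply ψ f g Φ _ hψg hdegΦ.le, mul_eq_zero] at hψA
  have hroot : Polynomial.IsRoot (Polynomial.cyclotomic n (Polynomial k ⧸ Ideal.span {π}))
      (ψ f / ψ g) := by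
    rcases hψA with h | h
    · exact absurd h (pow_ne_zero _ hψg)
    · rw [hΦdef, Polynomial.eval₂_eq_eval_map, Polynomial.map_cyclotomic] at h
      exact h
  have hprim : IsPrimitiveRoot (ψ f / ψ g) n := Polynomial.isRoot_cyclotomic_iff.mp hroot
  have h1 : (ψ f / ψ g) ^ m = 1 := by
    have h2 := (hker _).mpr hπm
    rw [map_sub, map_pow, map_pow, sub_eq_zero] at h2
    rw [div_pow, h2, div_self (pow_ne_zero _ hψg)]
  have := Nat.le_of_dvd (by omega) (hprim.dvd_of_pow_eq_one m h1)
  omega
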